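/- (Linear convergence with inexact radius, Theorem 2.) Let $x^* \in \mathbb{R}^n$, $0 < r \le 1$, $0 < \beta \le 1/2$, and $R$ satisfy $\beta\|x_0 - x^*\| \le R \le (1-\beta)\|x_0 - x^*\|$. Suppose $x_{t+1} = x_t - \eta_t g_t$ with nonzero $g_t$ satisfying $\langle g_t, x_t - x^* \rangle \ge r\|g_t\|\|x_t - x^*\|$, and $\eta_t = r(1 + (\beta^2 - 2\beta)r^2)^{t/2} R / \|g_t\|$. Then $\|x_t - x^*\| \le (1 + (\beta^2 - 2\beta)r^2)^{t/2}\|x_0 - x^*\|$ for all $t$. -/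

import Mathlib

open scoped RealInnerProductSpace Classical

/-- Convexity of the quadratic `a ↦ a^2 - 2*r*s*a + s^2`: bounded on `[0, A]` by its
endpoint values. -/
lemma quad_endpoint (a A s T r : ℝ) (ha0 : 0 ≤ a) (haA : a ≤ A)
    (h0 : s ^ 2 ≤ T) (hA : A ^ 2 - 2 * r * s * A + s ^ 2 ≤ T) :
    a ^ 2 - 2 * r * s * a + s ^ 2 ≤ T := by
  rcases eq_or_lt_of_le (ha0.trans haA) with h | hApos
  · have hA0 : A = 0 := h.symm
    have ha : a = 0 := le_antisymm (haA.trans_eq hA0) ha0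
    simpa [ha] using h0
  · have h1 : 0 ≤ (A - a) * (T - s ^ 2) :=
      mul_nonneg (by linarith) (by linarith)
    have h2 : 0 ≤ a * (T - (A ^ 2 - 2 * r * s * A + s ^ 2)) :=
      mul_nonneg ha0 (by linarith)
    have h3 : 0 ≤ a * A * (A - a) :=
      mul_nonneg (mul_nonneg ha0 (le_of_lt hApos)) (by linarith)
    nlinarith [hApos]


lemma aux_c_pos (r β : ℝ) (hr0 : 0 < r) (hr1 : r ≤ 1) (hβ0 : 0 < β) (hβ1 : β < 1) :
    0 < 1 + (β ^ 2 - 2 * β) * r ^ 2 := by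
  have h1 : 0 ≤ 1 - r ^ 2 := by nlinarith
  have h1b : 0 < 1 - β := by linarith
  have h2 : 0 < r ^ 2 * (1 - β) ^ 2 := by positivity
  nlinarith

lemma aux_key0 (r β R D : ℝ) (hr0 : 0 < r) (hr1 : r ≤ 1) (hD0 : 0 ≤ D)
    (hRnn : 0 ≤ R) (hR1 : R ≤ (1 - β) * D) :
    r ^ 2 * R ^ 2 ≤ (1 + (β ^ 2 - 2 * β) * r ^ 2) * D ^ 2 := by
  have hRsq : R ^ 2 ≤ (1 - β) ^ 2 * D ^ 2 := by nlinarith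
  have h1 : r ^ 2 * R ^ 2 ≤ r ^ 2 * ((1 - β) ^ 2 * D ^ 2) :=
    mul_le_mul_of_nonneg_left hRsq (sq_nonneg r)
  have h2 : 0 ≤ (1 - r ^ 2) * D ^ 2 :=
    mul_nonneg (by nlinarith) (sq_nonneg D)
  nlinarith

lemma aux_keyA (r β R D : ℝ) (hr0 : 0 < r) (hD0 : 0 ≤ D)
    (hR0 : β * D ≤ R) (hR1 : R ≤ (1 - β) * D) :
    D ^ 2 - 2 * r ^ 2 * R * D + r ^ 2 * R ^ 2 ≤ (1 + (β ^ 2 - 2 * β) * r ^ 2) * D ^ 2 := by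
  have hbb : 0 ≤ (R - β * D) * ((1 - β) * D - R) :=
    mul_nonneg (by linarith) (by linarith)
  have hbd : 0 ≤ D * (R - β * D) := mul_nonneg hD0 (by linarith)
  nlinarith [mul_nonneg (sq_nonneg r) hbb, mul_nonneg (sq_nonneg r) hbd]

/-- Linear convergence with inexact radius estimate (Theorem 2). -/
theorem stmt16 {F : Type*} [NormedAddCommGroup F] [InnerProductSpace ℝ F]
    (x g : ℕ → F) (xstar : F) (r β R : ℝ)
    (hr0 : 0 < r) (hr1 : r ≤ 1) (hβ0 : 0 < β) (hβ1 : β ≤ 1 / 2)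
    (hR0 : β * ‖x 0 - xstar‖ ≤ R) (hR1 : R ≤ (1 - β) * ‖x 0 - xstar‖)
    (hg : ∀ t, x t ≠ xstar → g t ≠ 0)
    (hangle : ∀ t, x t ≠ xstar →
      ⟪g t, x t - xstar⟫ ≥ r * ‖g t‖ * ‖x t - xstar‖)
    (hupdate : ∀ t, x (t + 1) =
      if x t = xstar then x t
      else x t - ((r * (1 + (β ^ 2 - 2 * β) * r ^ 2) ^ ((t : ℝ) / 2) * R) / ‖g t‖) • g t) :
    ∀ t, ‖x t - xstar‖ ≤ (1 + (β ^ 2 - 2 * β) * r ^ 2) ^ ((t : ℝ) / 2) * ‖x 0 - xstar‖ := by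
  set c : ℝ := 1 + (β ^ 2 - 2 * β) * r ^ 2 with hc
  set D : ℝ := ‖x 0 - xstar‖ with hDdef
  have hD0 : 0 ≤ D := norm_nonneg _
  have hβ1' : β < 1 := lt_of_le_of_lt hβ1 (by norm_num)
  have hc0 : 0 < c := aux_c_pos r β hr0 hr1 hβ0 hβ1'
  have hRnn : 0 ≤ R := le_trans (mul_nonneg hβ0.le hD0) hR0
  intro t
  induction t with
  | zero => simp [hDdef]
  | succ t ih =>
    set p : ℝ := c ^ ((t : ℝ) / 2) with hpdef
    have hp0 : 0 < p := Real.rpow_pos_of_pos hc0 _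
    set q : ℝ := c ^ (((t : ℕ) + 1 : ℝ) / 2) with hqdef
    have hq0 : 0 < q := Real.rpow_pos_of_pos hc0 _
    have hp2 : p ^ 2 = c ^ (t : ℝ) := by
      rw [hpdef, ← Real.rpow_natCast (c ^ ((t : ℝ) / 2)) 2, ← Real.rpow_mul hc0.le]
      norm_num
    have hq2 : q ^ 2 = c ^ (t : ℝ) * c := by
      rw [hqdef, ← Real.rpow_natCast (c ^ (((t : ℕ) + 1 : ℝ) / 2)) 2,
        ← Real.rpow_mul hc0.le]
      rw [show (((t : ℕ) + 1 : ℝ) / 2) * (2 : ℕ) = (t : ℝ) + 1 by push_cast; ring]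
      rw [Real.rpow_add hc0, Real.rpow_one]
    have hq2' : q ^ 2 = p ^ 2 * c := by rw [hq2, hp2]
    have hgoalcast : ((↑(t + 1) : ℝ) / 2) = (((t : ℕ) + 1 : ℝ) / 2) := by push_cast; ring
    rw [hupdate t]
    by_cases hx : x t = xstar
    · rw [if_pos hx, hx]
      simp only [sub_self, norm_zero]
      rw [hgoalcast]
      positivity
    · rw [if_neg hx]
      have hG : g t ≠ 0 := hg t hx
      have hG0 : 0 < ‖g t‖ := norm_pos_iff.mpr hG
      set a : ℝ := ‖x t - xstar‖ with hadef
      have ha0 : 0 ≤ a := norm_nonneg _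
      set η : ℝ := r * p * R / ‖g t‖ with hηdef
      have hη0 : 0 ≤ η := by positivity
      have hηG : η * ‖g t‖ = r * p * R := by
        rw [hηdef, div_mul_cancel₀ _ hG0.ne']
      have hexp : x t - ((r * c ^ ((t : ℝ) / 2) * R) / ‖g t‖) • g t - xstar
          = (x t - xstar) - η • g t := by
        rw [hηdef, hpdef]; abel
      rw [hexp]
      have hnormsq : ‖(x t - xstar) - η • g t‖ ^ 2
          = a ^ 2 - 2 * η * ⟪g t, x t - xstar⟫ + η ^ 2 * ‖g t‖ ^ 2 := by
        rw [norm_sub_sq_real, real_inner_smul_right, norm_smul, real_inner_comm]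
        rw [Real.norm_eq_abs, abs_of_nonneg hη0]
        ring
      have hang := hangle t hx
      have hstep : ‖(x t - xstar) - η • g t‖ ^ 2
          ≤ a ^ 2 - 2 * r * (r * p * R) * a + (r * p * R) ^ 2 := by
        rw [hnormsq]
        have h1 : 2 * η * (r * ‖g t‖ * a) ≤ 2 * η * ⟪g t, x t - xstar⟫ := by
          apply mul_le_mul_of_nonneg_left hang (by linarith)
        have h2 : η ^ 2 * ‖g t‖ ^ 2 = (r * p * R) ^ 2 := by
          rw [← mul_pow, hηG]
        have h3 : 2 * η * (r * ‖g t‖ * a) = 2 * r * (r * p * R) * a := by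
          rw [← hηG]; ring
        nlinarith [h1]
      have h0 : (r * p * R) ^ 2 ≤ q ^ 2 * D ^ 2 := by
        have key : r ^ 2 * R ^ 2 ≤ c * D ^ 2 := aux_key0 r β R D hr0 hr1 hD0 hRnn hR1
        calc (r * p * R) ^ 2 = p ^ 2 * (r ^ 2 * R ^ 2) := by ring
          _ ≤ p ^ 2 * (c * D ^ 2) := by
              apply mul_le_mul_of_nonneg_left key (by positivity)
          _ = q ^ 2 * D ^ 2 := by rw [hq2']; ring
      have hAend : (p * D) ^ 2 - 2 * r * (r * p * R) * (p * D) + (r * p * R) ^ 2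
          ≤ q ^ 2 * D ^ 2 := by
        have key : D ^ 2 - 2 * r ^ 2 * R * D + r ^ 2 * R ^ 2 ≤ c * D ^ 2 :=
          aux_keyA r β R D hr0 hD0 hR0 hR1
        calc (p * D) ^ 2 - 2 * r * (r * p * R) * (p * D) + (r * p * R) ^ 2
            = p ^ 2 * (D ^ 2 - 2 * r ^ 2 * R * D + r ^ 2 * R ^ 2) := by ring
          _ ≤ p ^ 2 * (c * D ^ 2) := by
              apply mul_le_mul_of_nonneg_left key (by positivity)
          _ = q ^ 2 * D ^ 2 := by rw [hq2']; ring
      have hquad : a ^ 2 - 2 * r * (r * p * R) * a + (r * p * R) ^ 2 ≤ q ^ 2 * D ^ 2 :=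
        quad_endpoint a (p * D) (r * p * R) (q ^ 2 * D ^ 2) r ha0 ih h0 hAend
      have hsq : ‖(x t - xstar) - η • g t‖ ^ 2 ≤ (q * D) ^ 2 := by
        calc ‖(x t - xstar) - η • g t‖ ^ 2
            ≤ a ^ 2 - 2 * r * (r * p * R) * a + (r * p * R) ^ 2 := hstep
          _ ≤ q ^ 2 * D ^ 2 := hquad
          _ = (q * D) ^ 2 := by ring
      rw [hgoalcast]
      have hqD : 0 ≤ q * D := mul_nonneg hq0.le hD0
      have h := Real.sqrt_le_sqrt hsq
      rwa [Real.sqrt_sq (norm_nonneg _), Real.sqrt_sq hqD] at h
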